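/- arXiv:2212.02275 — 4 statements merged into one kernel-verified Lean document; each statement's English description precedes it below -/
import Mathlib

section
/- Let G and H be metrizable topological groups with completions Ĝ and Ĥ, and let f : G → H be a strict continuous homomorphism (i.e. the induced map G/ker f → im f is a topological isomorphism). Then the unique continuous extension f̂ : Ĝ → Ĥ is strict, with kernel equal to the closure of ker f and image equal to the closure of im f. -/
open UniformSpace

/-- A homomorphism of topological groups is *strict* if it is continuous and open onto its
image, i.e. the induced map `G/ker f → im f` is a topological isomorphism. -/
def IsStrictHom {G H : Type*} [TopologicalSpace G] [TopologicalSpace H] (f : G → H) : Prop :=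
  Continuous f ∧ ∀ U : Set G, IsOpen U → ∃ V : Set H, IsOpen V ∧ V ∩ Set.range f = f '' U

open Filter Topology Set Pointwise

section Aux

variable {G : Type*} [AddGroup G] [UniformSpace G] [IsUniformAddGroup G]

lemma cg_uniformity (G : Type*) [AddGroup G] [UniformSpace G] [IsUniformAddGroup G]
    [TopologicalSpace.PseudoMetrizableSpace G] : (uniformity G).IsCountablyGenerated := by
  rw [uniformity_eq_comap_nhds_zero G]
  infer_instance

lemma cg_uniformity_completion (H : Type*) [UniformSpace H] [(uniformity H).IsCountablyGenerated] :
    (uniformity (Completion H)).IsCountablyGenerated := by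
  have h1 : (uniformity (CauchyFilter H)).IsCountablyGenerated := by
    obtain ⟨s, hs⟩ := (uniformity H).exists_antitone_basis
    exact (CauchyFilter.basis_uniformity hs.toHasBasis).isCountablyGenerated
  show (uniformity (SeparationQuotient (CauchyFilter H))).IsCountablyGenerated
  rw [SeparationQuotient.uniformity_eq]
  exact Filter.map.isCountablyGenerated _ _

/-- A good basis of neighborhoods of `0`. -/
def GoodBasis (V : ℕ → Set G) : Prop :=
  (∀ m, V m ∈ 𝓝 (0 : G)) ∧ (∀ m, IsOpen (V m)) ∧ (∀ m, ∀ v ∈ V m, -v ∈ V m) ∧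
    (∀ m, V (m + 1) + V (m + 1) ⊆ V m) ∧ (∀ W ∈ 𝓝 (0 : G), ∃ m, V m ⊆ W)

lemma goodBasis_antitone {V : ℕ → Set G} (hV : GoodBasis V) : ∀ m k, V (m + k) ⊆ V m := by
  intro m k
  induction k with
  | zero => exact subset_rfl
  | succ k ih =>
    refine subset_trans (fun v hv => ?_) ih
    have h0 : (0 : G) ∈ V (m + k + 1) := mem_of_mem_nhds (hV.1 _)
    have := hV.2.2.2.1 (m + k) (Set.add_mem_add hv h0)
    simpa using this

lemma goodBasis_shift {V : ℕ → Set G} (hV : GoodBasis V) (s : ℕ) :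
    GoodBasis (fun m => V (m + s)) := by
  refine ⟨fun m => hV.1 _, fun m => hV.2.1 _, fun m => hV.2.2.1 _, fun m => by simpa [Nat.add_right_comm m 1 s] using hV.2.2.2.1 (m + s),
    fun W hW => ?_⟩
  obtain ⟨m, hm⟩ := hV.2.2.2.2 W hW
  exact ⟨m, subset_trans (by simpa [add_comm] using goodBasis_antitone hV m s) hm⟩

lemma exists_goodBasis [FirstCountableTopology G] : ∃ V : ℕ → Set G, GoodBasis V := by
  obtain ⟨u, hu⟩ := (𝓝 (0 : G)).exists_antitone_basis
  have key : ∀ s : Set G, ∃ t : Set G, (s ∈ 𝓝 (0 : G)) →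
      (t ∈ 𝓝 (0 : G) ∧ IsOpen t ∧ (∀ v ∈ t, -v ∈ t) ∧ t + t ⊆ s) ∧ t ⊆ s := by
    intro s
    by_cases hs : s ∈ 𝓝 (0 : G)
    · obtain ⟨t, hto, ht0, htadd⟩ := exists_open_nhds_zero_half hs
      have htt : (t ∩ (-t)) + (t ∩ (-t)) ⊆ s := by
        rintro x ⟨a, ha, b, hb, rfl⟩
        exact htadd a ha.1 b hb.1
      have h0 : (0 : G) ∈ t ∩ (-t) := ⟨ht0, by simpa using ht0⟩
      refine ⟨t ∩ (-t), fun _ => ⟨⟨?_, hto.inter hto.neg, ?_, htt⟩, ?_⟩⟩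
      · exact (hto.inter hto.neg).mem_nhds h0
      · rintro v ⟨hv1, hv2⟩
        exact ⟨by simpa using hv2, by simpa using hv1⟩
      · intro v hv
        simpa using htt (Set.add_mem_add hv h0)
    · exact ⟨∅, fun h => absurd h hs⟩
  choose T hT using key
  let V : ℕ → Set G := fun m => Nat.rec (T (u 0)) (fun m Vm => T Vm ∩ T (u (m + 1))) m
  have hVs : ∀ m, V (m + 1) = T (V m) ∩ T (u (m + 1)) := fun m => rfl
  have hmem : ∀ m, V m ∈ 𝓝 (0 : G) := by
    intro m
    induction m with
    | zero => exact ((hT (u 0) (hu.mem 0)).1).1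
    | succ m ih => exact Filter.inter_mem ((hT _ ih).1).1 ((hT _ (hu.mem _)).1).1
  have hsub : ∀ m, V m ⊆ u m := by
    intro m
    cases m with
    | zero => exact (hT (u 0) (hu.mem 0)).2
    | succ m => exact subset_trans Set.inter_subset_right (hT _ (hu.mem _)).2
  refine ⟨V, hmem, ?_, ?_, ?_, ?_⟩
  · intro m
    cases m with
    | zero => exact ((hT (u 0) (hu.mem 0)).1).2.1
    | succ m => exact (((hT _ (hmem m)).1).2.1.inter ((hT _ (hu.mem _)).1).2.1)
  · intro m v hv
    cases m with
    | zero => exact ((hT (u 0) (hu.mem 0)).1).2.2.1 v hv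
    | succ m => exact ⟨((hT _ (hmem m)).1).2.2.1 v hv.1, ((hT _ (hu.mem _)).1).2.2.1 v hv.2⟩
  · intro m
    refine subset_trans (Set.add_subset_add Set.inter_subset_left Set.inter_subset_left)
      ((hT _ (hmem m)).1).2.2.2
  · intro W hW
    obtain ⟨m, -, hm⟩ := hu.toHasBasis.mem_iff.mp hW
    exact ⟨m, (hsub m).trans hm⟩

end Aux

section Seq

variable {G H : Type*} [AddGroup G] [UniformSpace G] [IsUniformAddGroup G]
  [AddGroup H] [UniformSpace H] [IsUniformAddGroup H]

lemma goodBasis_mono {V : ℕ → Set G} (hV : GoodBasis V) {i a : ℕ} (h : i ≤ a) : V a ⊆ V i := by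
  obtain ⟨k, rfl⟩ := Nat.exists_eq_add_of_le h
  exact goodBasis_antitone hV i k

lemma tele_mem {V : ℕ → Set G} (hV : GoodBasis V) {h : ℕ → G}
    (hd : ∀ m, -h m + h (m + 1) ∈ V (m + 1)) : ∀ n k, -h n + h (n + k) ∈ V n := by
  intro n k
  induction k generalizing n with
  | zero => simpa using mem_of_mem_nhds (hV.1 n)
  | succ k ih =>
    have h1 : -h n + h (n + 1) ∈ V (n + 1) := hd n
    have h2 : -h (n + 1) + h ((n + 1) + k) ∈ V (n + 1) := ih (n + 1)
    have h3 := hV.2.2.2.1 n (Set.add_mem_add h1 h2)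
    have h4 : (-h n + h (n + 1)) + (-h (n + 1) + h ((n + 1) + k)) = -h n + h (n + (k + 1)) := by
      rw [add_assoc, add_neg_cancel_left, show n + (k + 1) = (n + 1) + k by omega]
    rwa [h4] at h3

lemma tele_cauchySeq {V : ℕ → Set G} (hV : GoodBasis V) {h : ℕ → G}
    (hd : ∀ m, -h m + h (m + 1) ∈ V (m + 1)) : CauchySeq h := by
  have hb : (𝓝 (0 : G)).HasBasis (fun _ : ℕ => True) V :=
    ⟨fun W => ⟨fun hW => (hV.2.2.2.2 W hW).imp fun m hm => ⟨trivial, hm⟩,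
      fun ⟨m, _, hm⟩ => mem_of_superset (hV.1 m) hm⟩⟩
  have hub : (uniformity G).HasBasis (fun _ : ℕ => True)
      (fun m => {p : G × G | -p.1 + p.2 ∈ V m}) := by
    rw [uniformity_eq_comap_neg_add_nhds_zero]
    exact hb.comap _
  refine hub.cauchySeq_iff.mpr fun i _ => ⟨i, fun a ha b hb2 => ?_⟩
  rcases le_total a b with hab | hab
  · obtain ⟨k, rfl⟩ := Nat.exists_eq_add_of_le hab
    exact goodBasis_mono hV ha (tele_mem hV hd a k)
  · obtain ⟨k, rfl⟩ := Nat.exists_eq_add_of_le hab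
    have := hV.2.2.1 i _ (goodBasis_mono hV hb2 (tele_mem hV hd b k))
    simpa [neg_add_rev] using this

lemma correction (f : G →+ H) (hstrict : IsStrictHom ⇑f) {V : ℕ → Set G} (hV : GoodBasis V)
    (u : ℕ → G) (hc : CauchySeq (fun k => f (u k))) :
    ∃ (n : ℕ → ℕ) (h : ℕ → G), StrictMono n ∧ h 0 = u (n 0) ∧
      (∀ m, f (h m) = f (u (n m))) ∧ ∀ m, -h m + h (m + 1) ∈ V (m + 1) := by
  choose W hWopen hWeq using fun m => hstrict.2 (V m) (hV.2.1 m)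
  have hWnhds : ∀ m, W m ∈ 𝓝 (0 : H) := by
    intro m
    refine (hWopen m).mem_nhds ?_
    have h1 : (0 : H) ∈ f '' V m := ⟨0, mem_of_mem_nhds (hV.1 m), map_zero f⟩
    rw [← hWeq m] at h1
    exact h1.1
  have hent : ∀ m, {p : H × H | -p.1 + p.2 ∈ W m} ∈ uniformity H := by
    intro m
    rw [uniformity_eq_comap_neg_add_nhds_zero]
    exact preimage_mem_comap (hWnhds m)
  have hcs := cauchySeq_iff.mp hc
  choose N hN using fun m => hcs _ (hent m)
  set n : ℕ → ℕ := fun m => Nat.rec (max (N 0) (N 1)) (fun m nm => max (nm + 1) (N (m + 2))) m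
    with hn
  have hns : ∀ m, n (m + 1) = max (n m + 1) (N (m + 2)) := fun m => rfl
  have hmono : StrictMono n := strictMono_nat_of_lt_succ fun m =>
    lt_of_lt_of_le (Nat.lt_succ_self _) (by rw [hns]; exact le_max_left _ _)
  have hnN : ∀ m, N (m + 1) ≤ n m := by
    intro m
    cases m with
    | zero => exact le_max_right _ _
    | succ m => rw [hns]; exact le_max_right _ _
  have hdiff : ∀ m, -f (u (n m)) + f (u (n (m + 1))) ∈ f '' V (m + 1) := by
    intro m
    rw [← hWeq (m + 1)]
    refine ⟨hN (m + 1) (n m) (hnN m) (n (m + 1))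
      (le_trans (hnN m) (le_of_lt (hmono (Nat.lt_succ_self m)))), ?_⟩
    exact ⟨-u (n m) + u (n (m + 1)), by rw [map_add, map_neg]⟩
  choose w hw hfw using hdiff
  set h : ℕ → G := fun m => Nat.rec (u (n 0)) (fun m hm => hm + w m) m with hh
  have hh0 : h 0 = u (n 0) := rfl
  have hhs : ∀ m, h (m + 1) = h m + w m := fun m => rfl
  have hfh : ∀ m, f (h m) = f (u (n m)) := by
    intro m
    induction m with
    | zero => rw [hh0]
    | succ m ih => rw [hhs, map_add, ih, hfw m, add_neg_cancel_left]
  exact ⟨n, h, hmono, hh0, hfh, fun m => by rw [hhs, neg_add_cancel_left]; exact hw m⟩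

lemma main_aux (f : G →+ H) (hstrict : IsStrictHom ⇑f) {V : ℕ → Set G} (hV : GoodBasis V)
    (s : ℕ) (u : ℕ → G) (S : Set G) (hu : ∀ k, u k ∈ S) (y : Completion H)
    (hy : Tendsto (fun k => ((f (u k) : H) : Completion H)) atTop (𝓝 y)) :
    ∃ x : Completion G, Completion.map ⇑f x = y ∧
      x ∈ closure ((fun g : G => (g : Completion G)) '' (S + V s)) := by
  have huc : UniformContinuous ⇑f := uniformContinuous_addMonoidHom_of_continuous hstrict.1
  have hfu : CauchySeq (fun k => f (u k)) := by
    have h1 : CauchySeq (fun k => ((f (u k) : H) : Completion H)) := hy.cauchySeq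
    refine (Completion.isUniformInducing_coe H).cauchy_map_iff.mp ?_
    rw [Filter.map_map]
    exact h1
  obtain ⟨n, h, hmono, hh0, hfh, hd⟩ := correction f hstrict (goodBasis_shift hV s) u hfu
  have hcs : CauchySeq h := tele_cauchySeq (goodBasis_shift hV s) hd
  have hcs2 : CauchySeq (fun m => (h m : Completion G)) :=
    hcs.map (Completion.uniformContinuous_coe G)
  obtain ⟨x, hx⟩ := cauchySeq_tendsto_of_complete hcs2
  refine ⟨x, ?_, ?_⟩
  · have t1 : Tendsto (fun m => Completion.map ⇑f ((h m : G) : Completion G)) atTop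
        (𝓝 (Completion.map ⇑f x)) := (Completion.continuous_map.tendsto x).comp hx
    have t2 : Tendsto (fun m => ((f (u (n m)) : H) : Completion H)) atTop (𝓝 y) :=
      hy.comp hmono.tendsto_atTop
    have he : (fun m => Completion.map ⇑f ((h m : G) : Completion G))
        = fun m => ((f (u (n m)) : H) : Completion H) := by
      funext m
      rw [Completion.map_coe huc, hfh m]
    rw [he] at t1
    exact tendsto_nhds_unique t1 t2
  · refine mem_closure_of_tendsto hx (Eventually.of_forall fun m => ?_)
    refine Set.mem_image_of_mem _ ?_
    have h5 : h m = h 0 + (-h 0 + h m) := by rw [add_neg_cancel_left]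
    rw [h5]
    refine Set.add_mem_add ?_ (by simpa using tele_mem (goodBasis_shift hV s) hd 0 m)
    rw [hh0]; exact hu _

end Seq

section Main

variable {G H : Type*} [AddGroup G] [UniformSpace G] [IsUniformAddGroup G]
    [AddGroup H] [UniformSpace H] [IsUniformAddGroup H]
    [TopologicalSpace.PseudoMetrizableSpace G] [TopologicalSpace.PseudoMetrizableSpace H]

lemma range_eq (f : G →+ H) (hstrict : IsStrictHom ⇑f) :
    Set.range (Completion.map ⇑f) =
      closure (Set.range fun g : G => ((f g : H) : Completion H)) := by
  haveI : (uniformity H).IsCountablyGenerated := cg_uniformity H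
  haveI : (uniformity (Completion H)).IsCountablyGenerated := cg_uniformity_completion H
  have huc : UniformContinuous ⇑f := uniformContinuous_addMonoidHom_of_continuous hstrict.1
  apply Set.eq_of_subset_of_subset
  · rintro y ⟨x, rfl⟩
    have h1 : Completion.map ⇑f x ∈
        Completion.map ⇑f '' closure (Set.range ((↑) : G → Completion G)) :=
      ⟨x, by rw [Completion.denseRange_coe.closure_range]; trivial, rfl⟩
    have h2 := image_closure_subset_closure_image Completion.continuous_map h1
    refine closure_mono ?_ h2
    rintro _ ⟨_, ⟨g, rfl⟩, rfl⟩
    exact ⟨g, (Completion.map_coe huc g).symm⟩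
  · intro y hy
    obtain ⟨z, hz, hzy⟩ := mem_closure_iff_seq_limit.mp hy
    choose u hu using hz
    obtain ⟨V, hV⟩ := exists_goodBasis (G := G)
    obtain ⟨x, hx, -⟩ := main_aux f hstrict hV 0 u Set.univ (fun _ => trivial) y
      (by simpa only [funext fun k => hu k] using hzy)
    exact ⟨x, hx⟩

lemma kernel_eq (f : G →+ H) (hstrict : IsStrictHom ⇑f) :
    {x : Completion G | Completion.map ⇑f x = 0} =
      closure ((fun g : G => (g : Completion G)) '' {g : G | f g = 0}) := by
  have huc : UniformContinuous ⇑f := uniformContinuous_addMonoidHom_of_continuous hstrict.1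
  apply Set.eq_of_subset_of_subset
  · -- hard direction
    intro x hx
    rw [mem_closure_iff_nhds]
    intro N hN
    -- find a small product neighborhood
    have ht : Tendsto (fun p : Completion G × Completion G => -p.1 + (x + p.2))
        (𝓝 ((0 : Completion G), (0 : Completion G))) (𝓝 x) := by
      refine Continuous.tendsto' ?_ _ _ (by simp)
      exact ((continuous_fst.neg).add (continuous_const.add continuous_snd))
    have hpre : (fun p : Completion G × Completion G => -p.1 + (x + p.2)) ⁻¹' N
        ∈ 𝓝 ((0 : Completion G), (0 : Completion G)) := ht hN
    rw [nhds_prod_eq] at hpre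
    obtain ⟨U₁, hU₁, U₂, hU₂, hsub⟩ := Filter.mem_prod_iff.mp hpre
    -- the open neighborhood of 0 in G
    have hUopen : IsOpen ((fun g : G => (g : Completion G)) ⁻¹' interior U₁) :=
      isOpen_interior.preimage (Completion.continuous_coe G)
    set U : Set G := (fun g : G => (g : Completion G)) ⁻¹' interior U₁ with hU
    have hUnhds : U ∈ 𝓝 (0 : G) := by
      refine hUopen.mem_nhds ?_
      show ((0 : G) : Completion G) ∈ interior U₁
      rw [Completion.coe_zero]
      exact mem_interior_iff_mem_nhds.mpr hU₁
    obtain ⟨V, hVopen, hVeq⟩ := hstrict.2 U hUopen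
    -- the canonical filter on G converging to x
    set F : Filter G := Filter.comap (fun g : G => (g : Completion G)) (𝓝 x) with hF
    haveI : F.NeBot := Completion.isDenseInducing_coe.comap_nhds_neBot x
    have htf : Tendsto (fun g : G => f g) F (𝓝 (0 : H)) := by
      have h1 : Tendsto (fun g : G => (g : Completion G)) F (𝓝 x) := tendsto_comap
      have h2 : Tendsto (fun g : G => Completion.map ⇑f (g : Completion G)) F
          (𝓝 (Completion.map ⇑f x)) := (Completion.continuous_map.tendsto x).comp h1
      have h3 : Tendsto (fun g : G => ((f g : H) : Completion H)) F (𝓝 (0 : Completion H)) := by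
        have he : (fun g : G => Completion.map ⇑f (g : Completion G))
            = fun g : G => ((f g : H) : Completion H) := funext fun g => Completion.map_coe huc g
        rw [he, hx] at h2
        exact h2
      have h4 : 𝓝 (0 : H) = Filter.comap (fun h : H => (h : Completion H))
          (𝓝 ((0 : H) : Completion H)) := Completion.isDenseInducing_coe.isInducing.nhds_eq_comap 0
      rw [h4, tendsto_comap_iff]
      rw [Completion.coe_zero]
      exact h3
    have hA₁ : (fun g : G => f g) ⁻¹' V ∈ F := htf (hVopen.mem_nhds (by
      have h0 : (0 : H) ∈ f '' U := ⟨0, mem_of_mem_nhds hUnhds, map_zero f⟩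
      rw [← hVeq] at h0
      exact h0.1))
    have hA₂ : (fun g : G => (g : Completion G)) ⁻¹' {z : Completion G | -x + z ∈ U₂} ∈ F := by
      refine Filter.preimage_mem_comap ?_
      have h5 : Tendsto (fun z : Completion G => -x + z) (𝓝 x) (𝓝 (0 : Completion G)) :=
        Continuous.tendsto' (continuous_const.add continuous_id) _ _ (by simp)
      exact h5 hU₂
    obtain ⟨g, hg₁, hg₂⟩ := Filter.nonempty_of_mem (Filter.inter_mem hA₁ hA₂)
    have hgV : f g ∈ V ∩ Set.range ⇑f := ⟨hg₁, ⟨g, rfl⟩⟩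
    rw [hVeq] at hgV
    obtain ⟨v, hv, hfv⟩ := hgV
    refine ⟨((-v + g : G) : Completion G), ?_, ?_⟩
    · have hmem := hsub (Set.mk_mem_prod (interior_subset (hv : _)) hg₂)
      have he2 : -((v : G) : Completion G) + (x + (-x + (g : G))) = ((-v + g : G) : Completion G) := by
        rw [add_neg_cancel_left, Completion.coe_add, Completion.coe_neg]
      rw [← he2]
      exact hmem
    · refine ⟨-v + g, ?_, rfl⟩
      show f (-v + g) = 0
      rw [map_add, map_neg, hfv, neg_add_cancel]
  · refine closure_minimal ?_ ?_
    · rintro _ ⟨g, hg, rfl⟩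
      show Completion.map ⇑f (g : Completion G) = 0
      rw [Completion.map_coe huc, show f g = 0 from hg, Completion.coe_zero]
    · exact isClosed_singleton.preimage Completion.continuous_map

end Main

section Strict

variable {G H : Type*} [AddGroup G] [UniformSpace G] [IsUniformAddGroup G]
    [AddGroup H] [UniformSpace H] [IsUniformAddGroup H]
    [TopologicalSpace.PseudoMetrizableSpace G] [TopologicalSpace.PseudoMetrizableSpace H]

lemma strict_part (f : G →+ H) (hstrict : IsStrictHom ⇑f) :
    IsStrictHom (Completion.map ⇑f) := by
  haveI : (uniformity H).IsCountablyGenerated := cg_uniformity H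
  haveI : (uniformity (Completion H)).IsCountablyGenerated := cg_uniformity_completion H
  have huc : UniformContinuous ⇑f := uniformContinuous_addMonoidHom_of_continuous hstrict.1
  have hadd : ∀ a b : Completion G, Completion.map ⇑f (a + b)
      = Completion.map ⇑f a + Completion.map ⇑f b := by
    intro a b
    refine Completion.induction_on₂ a b
      (isClosed_eq (Completion.continuous_map.comp (continuous_fst.add continuous_snd))
        ((Completion.continuous_map.comp continuous_fst).fun_add
          (Completion.continuous_map.comp continuous_snd))) fun a b => ?_
    rw [← Completion.coe_add, Completion.map_coe huc, Completion.map_coe huc,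
      Completion.map_coe huc, map_add, Completion.coe_add]
  have hneg : ∀ a : Completion G, Completion.map ⇑f (-a) = -Completion.map ⇑f a := by
    intro a
    refine Completion.induction_on a
      (isClosed_eq (Completion.continuous_map.comp continuous_neg)
        Completion.continuous_map.fun_neg) fun a => ?_
    rw [← Completion.coe_neg, Completion.map_coe huc, Completion.map_coe huc, map_neg,
      Completion.coe_neg]
  have core0 : ∀ W ∈ 𝓝 (0 : Completion G), ∃ Vo : Set (Completion H), IsOpen Vo ∧
      (0 : Completion H) ∈ Vo ∧
      Vo ∩ Set.range (Completion.map ⇑f) ⊆ Completion.map ⇑f '' W := by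
    intro W hW
    obtain ⟨K, hKnhds, hKclosed, hKW⟩ := exists_mem_nhds_isClosed_subset hW
    obtain ⟨O, hOopen, hO0, hOhalf⟩ := exists_open_nhds_zero_half hKnhds
    obtain ⟨Vb, hVb⟩ := exists_goodBasis (G := G)
    set U : Set G := (fun g : G => (g : Completion G)) ⁻¹' O with hUdef
    have hUopen : IsOpen U := hOopen.preimage (Completion.continuous_coe G)
    have h00 : ((0 : G) : Completion G) ∈ O := by rw [Completion.coe_zero]; exact hO0
    have hUnhds : U ∈ 𝓝 (0 : G) := hUopen.mem_nhds h00
    obtain ⟨s, hs⟩ := hVb.2.2.2.2 U hUnhds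
    obtain ⟨V₁, hV₁open, hV₁eq⟩ := hstrict.2 U hUopen
    obtain ⟨V₂, hV₂open, hV₂pre⟩ :=
      (Completion.isDenseInducing_coe.isInducing.isOpen_iff).mp hV₁open
    have h01 : (0 : H) ∈ V₁ := by
      have h0 : (0 : H) ∈ f '' U := ⟨0, h00, map_zero f⟩
      rw [← hV₁eq] at h0
      exact h0.1
    refine ⟨V₂, hV₂open, ?_, ?_⟩
    · rw [← hV₂pre] at h01
      have : (((0 : H)) : Completion H) ∈ V₂ := h01
      rwa [Completion.coe_zero] at this
    · rintro y ⟨hyV₂, x₀, rfl⟩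
      have hy1 : Completion.map ⇑f x₀ ∈
          closure (Set.range fun g : G => ((f g : H) : Completion H)) := by
        rw [← range_eq f hstrict]
        exact ⟨x₀, rfl⟩
      have hy2 : Completion.map ⇑f x₀ ∈
          closure ((Set.range fun g : G => ((f g : H) : Completion H)) ∩ V₂) := by
        rw [mem_closure_iff_nhds] at hy1 ⊢
        intro t ht
        obtain ⟨z, hz1, hz2⟩ := hy1 (t ∩ V₂) (Filter.inter_mem ht (hV₂open.mem_nhds hyV₂))
        exact ⟨z, hz1.1, hz2, hz1.2⟩
      obtain ⟨z, hz, hzy⟩ := mem_closure_iff_seq_limit.mp hy2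
      have hpick : ∀ k, ∃ u : G, u ∈ U ∧ ((f u : H) : Completion H) = z k := by
        intro k
        obtain ⟨⟨g, hg⟩, hzV₂⟩ := hz k
        have hg' : ((f g : H) : Completion H) = z k := hg
        have h6 : f g ∈ V₁ ∩ Set.range ⇑f := by
          refine ⟨?_, ⟨g, rfl⟩⟩
          rw [← hV₂pre]
          show ((f g : H) : Completion H) ∈ V₂
          rw [hg']
          exact hzV₂
        rw [hV₁eq] at h6
        obtain ⟨u, hu, hfu⟩ := h6
        exact ⟨u, hu, by rw [hfu, hg']⟩
      choose u hu hfu using hpick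
      obtain ⟨x, hxy, hxcl⟩ := main_aux f hstrict hVb s u U hu _
        (by simpa only [funext hfu] using hzy)
      refine ⟨x, ?_, hxy⟩
      refine hKW (hKclosed.closure_subset_iff.mpr ?_ hxcl)
      rintro _ ⟨g, hg, rfl⟩
      obtain ⟨a, ha, b, hb, rfl⟩ := hg
      show ((a + b : G) : Completion G) ∈ K
      rw [Completion.coe_add]
      exact hOhalf _ ha _ (hs hb)
  refine ⟨Completion.continuous_map, ?_⟩
  intro U hUopen
  have hchoice : ∀ x : Completion G, ∃ Vo : Set (Completion H), x ∈ U →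
      IsOpen Vo ∧ (0 : Completion H) ∈ Vo ∧
      Vo ∩ Set.range (Completion.map ⇑f) ⊆
        Completion.map ⇑f '' ((fun z => x + z) ⁻¹' U) := by
    intro x
    by_cases hx : x ∈ U
    · obtain ⟨Vo, h1, h2, h3⟩ := core0 ((fun z => x + z) ⁻¹' U) (by
        refine (hUopen.preimage (continuous_const.add continuous_id)).mem_nhds ?_
        show x + 0 ∈ U
        rwa [add_zero])
      exact ⟨Vo, fun _ => ⟨h1, h2, h3⟩⟩
    · exact ⟨∅, fun h => absurd h hx⟩
  choose Vo hVo using hchoice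
  refine ⟨⋃ x ∈ U, (fun z => -Completion.map ⇑f x + z) ⁻¹' Vo x, ?_, ?_⟩
  · exact isOpen_biUnion fun x hx => ((hVo x hx).1).preimage (continuous_const.add continuous_id)
  · apply Set.eq_of_subset_of_subset
    · rintro z ⟨hzV, x', rfl⟩
      obtain ⟨x, hxU, hzx⟩ := Set.mem_iUnion₂.mp hzV
      have hv : -Completion.map ⇑f x + Completion.map ⇑f x' ∈
          Vo x ∩ Set.range (Completion.map ⇑f) :=
        ⟨hzx, ⟨-x + x', by rw [hadd, hneg]⟩⟩
      obtain ⟨w, hw, hfw⟩ := (hVo x hxU).2.2 hv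
      refine ⟨x + w, hw, ?_⟩
      rw [hadd, hfw, add_neg_cancel_left]
    · rintro _ ⟨x, hxU, rfl⟩
      refine ⟨Set.mem_biUnion hxU ?_, ⟨x, rfl⟩⟩
      show -Completion.map ⇑f x + Completion.map ⇑f x ∈ Vo x
      rw [neg_add_cancel]
      exact (hVo x hxU).2.1

end Strict


/-- Let `G`, `H` be metrizable topological groups with completions `Ĝ`, `Ĥ`, and let
`f : G → H` be a strict continuous homomorphism.  Then the unique continuous extension
`f̂ : Ĝ → Ĥ` is strict, with kernel the closure of `ker f` and image the closure of `im f`. -/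
theorem strict_completion_map {G H : Type*} [AddGroup G] [UniformSpace G] [IsUniformAddGroup G]
    [AddGroup H] [UniformSpace H] [IsUniformAddGroup H]
    [TopologicalSpace.PseudoMetrizableSpace G] [TopologicalSpace.PseudoMetrizableSpace H]
    (f : G →+ H) (hstrict : IsStrictHom ⇑f) :
    IsStrictHom (Completion.map ⇑f) ∧
      {x : Completion G | Completion.map ⇑f x = 0} =
        closure ((fun g : G => (g : Completion G)) '' {g : G | f g = 0}) ∧
      Set.range (Completion.map ⇑f) =
        closure (Set.range fun g : G => ((f g : H) : Completion H)) := by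
  exact ⟨strict_part f hstrict, kernel_eq f hstrict, range_eq f hstrict⟩
end

section
/- Let G and H be Hausdorff abelian topological groups and f : G → H a continuous homomorphism. If the restriction of f to a dense subgroup D of G is strict (as a map D → f(D)), then f itself is strict. -/
lemma aux_key {G H : Type*}
    [TopologicalSpace G] [AddCommGroup G] [IsTopologicalAddGroup G]
    [TopologicalSpace H] [AddCommGroup H] [IsTopologicalAddGroup H]
    (f : G →+ H) (hf : Continuous f) (D : AddSubgroup G) (hD : Dense (D : Set G))
    (hstrict : IsStrictHom fun d : D => f d) {U : Set G} (hU : IsOpen U) (h0 : (0:G) ∈ U) :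
    ∃ V : Set H, IsOpen V ∧ (0:H) ∈ V ∧ V ∩ Set.range ⇑f ⊆ f '' U := by
  obtain ⟨W, hWo, hW0, hWsub⟩ : ∃ W : Set G, IsOpen W ∧ (0:G) ∈ W ∧
      ∀ a ∈ W, ∀ b ∈ W, a - b ∈ U := by
    have hc : Continuous fun p : G × G => p.1 - p.2 := continuous_fst.sub continuous_snd
    have hpre : IsOpen ((fun p : G × G => p.1 - p.2) ⁻¹' U) := hU.preimage hc
    rcases isOpen_prod_iff.1 hpre 0 0 (by simpa using h0) with ⟨s, t, hs, ht, h0s, h0t, hst⟩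
    exact ⟨s ∩ t, hs.inter ht, ⟨h0s, h0t⟩, fun a ha b hb => hst (Set.mk_mem_prod ha.1 hb.2)⟩
  obtain ⟨hc, hop⟩ := hstrict
  obtain ⟨V, hVo, hVeq⟩ := hop (Subtype.val ⁻¹' W) (hWo.preimage continuous_subtype_val)
  refine ⟨V, hVo, ?_, ?_⟩
  · have h : (0:H) ∈ (fun d : D => f d) '' (Subtype.val ⁻¹' W) :=
      ⟨0, by simpa using hW0, by simp⟩
    rw [← hVeq] at h
    exact h.1
  · rintro y ⟨hyV, g, rfl⟩
    have hNo : IsOpen (f ⁻¹' V ∩ (fun x => x - g) ⁻¹' W) :=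
      (hVo.preimage hf).inter (hWo.preimage (continuous_id.sub continuous_const))
    have hgN : g ∈ f ⁻¹' V ∩ (fun x => x - g) ⁻¹' W := ⟨hyV, by simpa using hW0⟩
    obtain ⟨d, hdD, hdV, hdW⟩ := hD.exists_mem_open hNo ⟨g, hgN⟩
    have hmem : f d ∈ V ∩ Set.range (fun d : D => f d) := ⟨hdV, ⟨d, hdD⟩, rfl⟩
    rw [hVeq] at hmem
    obtain ⟨w, hwW, hwfd⟩ := hmem
    refine ⟨(w : G) - (d - g), hWsub _ hwW _ hdW, ?_⟩
    have : f ((w : G) - (d - g)) = f w - f d + f g := by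
      simp [map_sub]; abel
    have hwfd2 : f (w : G) = f d := hwfd
    rw [this, hwfd2]
    abel

/-- Let `G`, `H` be Hausdorff abelian topological groups and `f : G → H` a continuous
homomorphism.  If the restriction of `f` to a dense subgroup `D ⊆ G` is strict (as a map
`D → f(D)`), then `f` itself is strict. -/
theorem strict_of_denseRestriction {G H : Type*}
    [TopologicalSpace G] [AddCommGroup G] [IsTopologicalAddGroup G] [T2Space G]
    [TopologicalSpace H] [AddCommGroup H] [IsTopologicalAddGroup H] [T2Space H]
    (f : G →+ H) (hf : Continuous f) (D : AddSubgroup G) (hD : Dense (D : Set G))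
    (hstrict : IsStrictHom fun d : D => f d) :
    IsStrictHom ⇑f := by
  refine ⟨hf, fun U hU => ?_⟩
  have key : ∀ u ∈ U, ∃ V : Set H, IsOpen V ∧ (0:H) ∈ V ∧
      V ∩ Set.range ⇑f ⊆ f '' ((fun x => x + u) ⁻¹' U) := by
    intro u hu
    exact aux_key f hf D hD hstrict (hU.preimage (continuous_id.add continuous_const))
      (by simpa using hu)
  choose V hVo hV0 hVsub using key
  refine ⟨⋃ (u : G) (hu : u ∈ U), (fun y => y + f u) '' V u hu, ?_, ?_⟩
  · exact isOpen_iUnion fun u => isOpen_iUnion fun hu =>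
      (Homeomorph.addRight (f u)).isOpenMap _ (hVo u hu)
  · ext y
    constructor
    · rintro ⟨hy1, g, rfl⟩
      simp only [Set.mem_iUnion] at hy1
      obtain ⟨u, hu, v, hv, hvy⟩ := hy1
      have hvrange : v ∈ V u hu ∩ Set.range ⇑f := by
        refine ⟨hv, g - u, ?_⟩
        rw [map_sub]
        have : f g = v + f u := hvy.symm
        rw [this]; abel
      obtain ⟨w, hwU, hwv⟩ := hVsub u hu hvrange
      exact ⟨w + u, hwU, by rw [map_add, hwv]; exact hvy⟩
    · rintro ⟨x, hxU, rfl⟩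
      refine ⟨?_, x, rfl⟩
      simp only [Set.mem_iUnion]
      exact ⟨x, hxU, 0, hV0 x hxU, by simp⟩
end

section
/- Let R be a ring, M a finitely presented R-module, and (N_n)_{n∈ℕ} a countable inverse system of flat R-modules satisfying the Mittag-Leffler condition. Then the natural map M ⊗_R (lim_n N_n) → lim_n (M ⊗_R N_n) is an isomorphism. -/
open TensorProduct

/-- The inverse limit of an inverse system of `R`-modules indexed by `ℕ`, as a submodule of
the product. -/
def invLim (R : Type*) [CommRing R] (N : ℕ → Type*) [∀ n, AddCommGroup (N n)]
    [∀ n, Module R (N n)] (t : ∀ n, N (n + 1) →ₗ[R] N n) : Submodule R (∀ n, N n) where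
  carrier := {x | ∀ n, t n (x (n + 1)) = x n}
  add_mem' := by
    intro a b ha hb n
    simp only [Set.mem_setOf_eq] at ha hb
    simp [ha n, hb n]
  zero_mem' := by intro n; simp
  smul_mem' := by
    intro c a ha n
    simp only [Set.mem_setOf_eq] at ha
    simp [ha n]

/-- The natural map `M ⊗ lim Nₙ → lim (M ⊗ Nₙ)`, sending `m ⊗ (xₙ)ₙ` to `(m ⊗ xₙ)ₙ`. -/
noncomputable def natTensorLimMap (R : Type*) [CommRing R] (M : Type*) [AddCommGroup M]
    [Module R M] (N : ℕ → Type*) [∀ n, AddCommGroup (N n)] [∀ n, Module R (N n)]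
    (t : ∀ n, N (n + 1) →ₗ[R] N n) :
    M ⊗[R] (invLim R N t) →ₗ[R]
      invLim R (fun n => M ⊗[R] N n) (fun n => LinearMap.lTensor M (t n)) :=
  TensorProduct.lift <| LinearMap.mk₂ R
    (fun m x => ⟨fun n => m ⊗ₜ[R] (x : ∀ n, N n) n, by
      intro n
      show LinearMap.lTensor M (t n) (m ⊗ₜ[R] (x : ∀ n, N n) (n + 1)) = m ⊗ₜ[R] (x : ∀ n, N n) n
      rw [LinearMap.lTensor_tmul, x.2 n]⟩)
    (fun m₁ m₂ x => Subtype.ext (funext fun n => add_tmul m₁ m₂ _))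
    (fun c m x => Subtype.ext (funext fun n => (smul_tmul' c m _).symm))
    (fun m x y => Subtype.ext (funext fun n => tmul_add m _ _))
    (fun c m x => Subtype.ext (funext fun n => tmul_smul c m _))

/-- The composite transition map `N (n+k) → N n` of the inverse system. -/
def downMap {R : Type*} [CommRing R] (N : ℕ → Type*) [∀ n, AddCommGroup (N n)]
    [∀ n, Module R (N n)] (t : ∀ n, N (n + 1) →ₗ[R] N n) (n : ℕ) :
    ∀ k : ℕ, N (n + k) →ₗ[R] N n
  | 0 => LinearMap.id
  | k + 1 => (downMap N t n k).comp (t (n + k))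

section Aux

variable {R : Type*} [CommRing R]
variable {A : ℕ → Type*} [∀ n, AddCommGroup (A n)] [∀ n, Module R (A n)]

/-- Transport along an equality of indices. -/
def castMap (R : Type*) [CommRing R] (A : ℕ → Type*) [∀ n, AddCommGroup (A n)]
    [∀ n, Module R (A n)] {a b : ℕ} (h : a = b) : A a →ₗ[R] A b := by
  subst h; exact LinearMap.id

@[simp] lemma castMap_self {a : ℕ} (h : a = a) (x : A a) : castMap R A h x = x := rfl

lemma castMap_apply_dep {a b : ℕ} (h : a = b) (c : ∀ n, A n) :
    castMap R A h (c a) = c b := by subst h; rfl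

lemma castMap_mem {a b : ℕ} (h : a = b) (P : ∀ n, Submodule R (A n)) {x : A a}
    (hx : x ∈ P a) : castMap R A h x ∈ P b := by subst h; exact hx

lemma castMap_natural (τ : ∀ n, A (n + 1) →ₗ[R] A n) {a b : ℕ} (h : a = b)
    (h' : a + 1 = b + 1) (x : A (a + 1)) :
    τ b (castMap R A h' x) = castMap R A h (τ a x) := by subst h; rfl

lemma castMap_castMap {a b c : ℕ} (h : a = b) (h' : b = c) (x : A a) :
    castMap R A h' (castMap R A h x) = castMap R A (h.trans h') x := by subst h; subst h'; rfl

lemma downMap_left (τ : ∀ n, A (n + 1) →ₗ[R] A n) (n : ℕ) :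
    ∀ (j : ℕ) (x : A (n + 1 + j)),
      downMap A τ n (j + 1) (castMap R A (by omega) x) = τ n (downMap A τ (n + 1) j x)
  | 0, x => rfl
  | j + 1, x => by
    have h1 : τ (n + (j + 1))
          (castMap R A (show n + 1 + (j + 1) = n + (j + 1) + 1 by omega) x)
        = castMap R A (show n + 1 + j = n + (j + 1) by omega) (τ (n + 1 + j) x) :=
      castMap_natural τ _ _ x
    show downMap A τ n (j + 1)
        (τ (n + (j + 1)) (castMap R A (show n + 1 + (j + 1) = n + (j + 1) + 1 by omega) x))
      = τ n (downMap A τ (n + 1) j (τ (n + 1 + j) x))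
    exact (congrArg (downMap A τ n (j + 1)) h1).trans (downMap_left τ n j (τ (n + 1 + j) x))

end Aux
section Systems

variable {R : Type*} [CommRing R]
variable {A : ℕ → Type*} [∀ n, AddCommGroup (A n)] [∀ n, Module R (A n)]
variable (τ : ∀ n, A (n + 1) →ₗ[R] A n)
variable {P : ∀ n, Submodule R (A n)}

lemma downMap_mem (hP : ∀ n, ∀ x ∈ P (n + 1), τ n x ∈ P n) (n : ℕ) :
    ∀ (k : ℕ) (x : A (n + k)), x ∈ P (n + k) → downMap A τ n k x ∈ P n
  | 0, _, hx => hx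
  | k + 1, x, hx => downMap_mem hP n k _ (hP (n + k) x hx)

lemma map_downMap_le (hP : ∀ n, ∀ x ∈ P (n + 1), τ n x ∈ P n) (n : ℕ) {k k' : ℕ}
    (h : k ≤ k') :
    (P (n + k')).map (downMap A τ n k') ≤ (P (n + k)).map (downMap A τ n k) := by
  induction h with
  | refl => exact le_rfl
  | @step m _ ih =>
    refine le_trans ?_ ih
    show (P (n + (m + 1))).map (downMap A τ n (m + 1)) ≤ (P (n + m)).map (downMap A τ n m)
    rw [show downMap A τ n (m + 1) = (downMap A τ n m).comp (τ (n + m)) from rfl,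
      Submodule.map_comp]
    exact Submodule.map_mono (fun x hx => by
      obtain ⟨y, hy, rfl⟩ := hx
      exact hP (n + m) y hy)

/-- vanishing of `lim¹` for a Mittag-Leffler system of submodules. -/
lemma exists_solution (hP : ∀ n, ∀ x ∈ P (n + 1), τ n x ∈ P n)
    (hML : ∀ n, ∃ k₀, ∀ k, k₀ ≤ k →
      (P (n + k)).map (downMap A τ n k) = (P (n + k₀)).map (downMap A τ n (k₀)))
    (c : ∀ n, A n) (hc : ∀ n, c n ∈ P n) :
    ∃ w : ∀ n, A n, (∀ n, w n ∈ P n) ∧ ∀ n, w n - τ n (w (n + 1)) = c n := by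
  classical
  choose k₀ hk₀ using hML
  let E : ∀ n, Submodule R (A n) := fun n => (P (n + k₀ n)).map (downMap A τ n (k₀ n))
  have hmemE : ∀ n k, k₀ n ≤ k → ∀ x ∈ P (n + k), downMap A τ n k x ∈ E n := by
    intro n k hk x hx
    have h := hk₀ n k hk
    show downMap A τ n k x ∈ (P (n + k₀ n)).map (downMap A τ n (k₀ n))
    rw [← h]
    exact ⟨x, hx, rfl⟩
  have hEP : ∀ n, E n ≤ P n := by
    rintro n x ⟨y, hy, rfl⟩
    exact downMap_mem τ hP n _ y hy
  -- surjectivity of transition maps between stable images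
  have hEsur : ∀ n, ∀ a ∈ E n, ∃ b ∈ E (n + 1), τ n b = a := by
    intro n a ha
    set j := max (k₀ n) (k₀ (n + 1) + 1) - 1 with hj
    have h1 : k₀ n ≤ j + 1 := by omega
    have h2 : k₀ (n + 1) ≤ j := by omega
    have ha' : a ∈ (P (n + (j + 1))).map (downMap A τ n (j + 1)) := by
      rw [hk₀ n (j + 1) h1]; exact ha
    obtain ⟨u, hu, rfl⟩ := ha'
    refine ⟨downMap A τ (n + 1) j (castMap R A (show n + (j + 1) = n + 1 + j by omega) u),
      ?_, ?_⟩
    · exact hmemE (n + 1) j h2 _ (castMap_mem _ P hu)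
    · have h3 := downMap_left τ n j (castMap R A (show n + (j + 1) = n + 1 + j by omega) u)
      rw [castMap_castMap, castMap_self] at h3
      exact h3.symm
  -- truncation bounds
  let L : ℕ → ℕ := fun n => Nat.rec (k₀ 0) (fun n Ln => max Ln ((n + 1) + k₀ (n + 1))) n
  have hL1 : ∀ n, n + k₀ n ≤ L n := by
    intro n
    cases n with
    | zero => show 0 + k₀ 0 ≤ k₀ 0; omega
    | succ m => exact le_max_right _ _
  have hL2 : ∀ n, L n ≤ L (n + 1) := fun n => le_max_left _ _
  let l : ℕ → ℕ := fun n => L n - n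
  have hlk : ∀ n, k₀ n ≤ l n := fun n => by have := hL1 n; simp only [l]; omega
  have hll : ∀ n, l n ≤ l (n + 1) + 1 := fun n => by
    have h1 := hL1 n; have h2 := hL1 (n + 1); have h3 := hL2 n; simp only [l]; omega
  -- the partial sums
  let f : ∀ n, ℕ → A n := fun n i => downMap A τ n i (c (n + i))
  let w' : ∀ n, A n := fun n => ∑ i ∈ Finset.range (l n + 1), f n i
  have hw'P : ∀ n, w' n ∈ P n := fun n =>
    Submodule.sum_mem _ (fun i _ => downMap_mem τ hP n i _ (hc (n + i)))
  let r : ∀ n, A n := fun n => ∑ i ∈ Finset.Ico (l n + 1) (l (n + 1) + 2), f n i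
  have hrE : ∀ n, r n ∈ E n := by
    intro n
    refine Submodule.sum_mem _ (fun i hi => ?_)
    rw [Finset.mem_Ico] at hi
    exact hmemE n i (by have := hlk n; omega) _ (hc (n + i))
  have hstep : ∀ n, τ n (w' (n + 1)) = ∑ i ∈ Finset.Ico 1 (l (n + 1) + 2), f n i := by
    intro n
    have e1 : τ n (w' (n + 1)) = ∑ j ∈ Finset.range (l (n + 1) + 1), f n (j + 1) := by
      rw [map_sum]
      refine Finset.sum_congr rfl (fun j _ => ?_)
      have h3 := downMap_left τ n j (c (n + 1 + j))
      rw [castMap_apply_dep (show n + 1 + j = n + (j + 1) by omega)] at h3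
      exact h3.symm
    rw [e1, Finset.sum_Ico_eq_sum_range]
    exact Finset.sum_congr rfl (fun j _ => congrArg (f n) (Nat.add_comm j 1))
  have hkey : ∀ n, w' n - τ n (w' (n + 1)) = c n - r n := by
    intro n
    have e2 : w' n = f n 0 + ∑ i ∈ Finset.Ico 1 (l n + 1), f n i := by
      show ∑ i ∈ Finset.range (l n + 1), f n i = _
      rw [Finset.range_eq_Ico, Finset.sum_eq_sum_Ico_succ_bot (by omega)]
    have e3 : (∑ i ∈ Finset.Ico 1 (l (n + 1) + 2), f n i)
        = (∑ i ∈ Finset.Ico 1 (l n + 1), f n i)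
          + ∑ i ∈ Finset.Ico (l n + 1) (l (n + 1) + 2), f n i := by
      rw [Finset.sum_Ico_consecutive]
      · omega
      · have := hll n; omega
    rw [hstep n, e2, e3]
    have : f n 0 = c n := rfl
    rw [this]
    abel
  -- the corrector sequence inside the stable images
  choose b hbE hbτ using hEsur
  have hV : ∃ V : ∀ n, {x : A n // x ∈ E n}, V 0 = ⟨0, zero_mem _⟩ ∧
      ∀ n, V (n + 1) = ⟨b n ((V n).1 - r n) (sub_mem (V n).2 (hrE n)),
        hbE n _ (sub_mem (V n).2 (hrE n))⟩ :=
    ⟨fun n => Nat.rec ⟨0, zero_mem _⟩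
      (fun n p => ⟨b n (p.1 - r n) (sub_mem p.2 (hrE n)),
        hbE n _ (sub_mem p.2 (hrE n))⟩) n, rfl, fun n => rfl⟩
  obtain ⟨V, hV0, hVs⟩ := hV
  have hVτ : ∀ n, τ n (V (n + 1)).1 = (V n).1 - r n := by
    intro n
    rw [hVs n]
    exact hbτ n _ _
  refine ⟨fun n => w' n + (V n).1, fun n => Submodule.add_mem _ (hw'P n) (hEP n (V n).2),
    fun n => ?_⟩
  show w' n + ↑(V n) - τ n (w' (n + 1) + ↑(V (n + 1))) = c n
  have h := hkey n
  rw [sub_eq_iff_eq_add] at h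
  rw [map_add, hVτ n, h]
  abel

end Systems
set_option synthInstance.maxHeartbeats 1000000
section LimSurj

variable {R : Type*} [CommRing R]
variable {A B : ℕ → Type*} [∀ n, AddCommGroup (A n)] [∀ n, Module R (A n)]
  [∀ n, AddCommGroup (B n)] [∀ n, Module R (B n)]

lemma invLim_map_surjective (τA : ∀ n, A (n + 1) →ₗ[R] A n) (τB : ∀ n, B (n + 1) →ₗ[R] B n)
    (p : ∀ n, A n →ₗ[R] B n)
    (hcomm : ∀ n (x : A (n + 1)), p n (τA n x) = τB n (p (n + 1) x))
    (hsurj : ∀ n, Function.Surjective (p n))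
    (hML : ∀ n, ∃ k₀, ∀ k, k₀ ≤ k →
      (LinearMap.ker (p (n + k))).map (downMap A τA n k)
        = (LinearMap.ker (p (n + k₀))).map (downMap A τA n k₀))
    (y : ∀ n, B n) (hy : y ∈ invLim R B τB) :
    ∃ x ∈ invLim R A τA, ∀ n, p n (x n) = y n := by
  classical
  choose z hz using fun n => hsurj n (y n)
  have hP : ∀ n, ∀ x ∈ LinearMap.ker (p (n + 1)), τA n x ∈ LinearMap.ker (p n) := by
    intro n x hx
    rw [LinearMap.mem_ker] at hx ⊢
    rw [hcomm, hx, map_zero]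
  have hcP : ∀ n, z n - τA n (z (n + 1)) ∈ LinearMap.ker (p n) := by
    intro n
    rw [LinearMap.mem_ker, map_sub, hz, hcomm, hz, hy n, sub_self]
  obtain ⟨w, hwP, hwEq⟩ := exists_solution τA hP hML (fun n => z n - τA n (z (n + 1))) hcP
  refine ⟨fun n => z n - w n, fun n => ?_, fun n => ?_⟩
  · show τA n (z (n + 1) - w (n + 1)) = z n - w n
    have := hwEq n
    rw [map_sub]
    have h2 : τA n (w (n + 1)) = w n - (z n - τA n (z (n + 1))) := by
      rw [← this]; abel
    rw [h2]
    abel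
  · rw [map_sub, hz, (hwP n), sub_zero]

end LimSurj

section Tensor

variable {R : Type*} [CommRing R]
variable {N : ℕ → Type*} [∀ n, AddCommGroup (N n)] [∀ n, Module R (N n)]
variable (t : ∀ n, N (n + 1) →ₗ[R] N n)

lemma natTensorLimMap_tmul (M : Type*) [AddCommGroup M] [Module R M]
    (m : M) (x : invLim R N t) :
    natTensorLimMap R M N t (m ⊗ₜ[R] x)
      = ⟨fun n => m ⊗ₜ[R] (x : ∀ n, N n) n, (natTensorLimMap R M N t (m ⊗ₜ[R] x)).2⟩ := by
  apply Subtype.ext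
  rfl

lemma natTensorLimMap_apply_coe_tmul (M : Type*) [AddCommGroup M] [Module R M]
    (m : M) (x : invLim R N t) (n : ℕ) :
    (natTensorLimMap R M N t (m ⊗ₜ[R] x) : ∀ n, M ⊗[R] N n) n
      = m ⊗ₜ[R] (x : ∀ n, N n) n := rfl

lemma natTensorLimMap_naturality {M₁ M₂ : Type*} [AddCommGroup M₁] [Module R M₁]
    [AddCommGroup M₂] [Module R M₂] (f : M₁ →ₗ[R] M₂)
    (u : M₁ ⊗[R] invLim R N t) (n : ℕ) :
    (natTensorLimMap R M₂ N t (f.rTensor _ u) : ∀ n, M₂ ⊗[R] N n) n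
      = (f.rTensor (N n)) ((natTensorLimMap R M₁ N t u : ∀ n, M₁ ⊗[R] N n) n) := by
  induction u with
  | zero => simp
  | tmul m x => rfl
  | add a b ha hb =>
    rw [map_add, map_add, map_add]
    show (natTensorLimMap R M₂ N t (f.rTensor _ a) : ∀ n, M₂ ⊗[R] N n) n
        + (natTensorLimMap R M₂ N t (f.rTensor _ b) : ∀ n, M₂ ⊗[R] N n) n = _
    rw [ha, hb, Submodule.coe_add, Pi.add_apply, map_add]

/-- The standard equivalence `R^b ⊗ X ≃ X^b`. -/
noncomputable def finTensorEquiv (R : Type*) [CommRing R] (b : ℕ) (X : Type*)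
    [AddCommGroup X] [Module R X] : ((Fin b → R) ⊗[R] X) ≃ₗ[R] (Fin b → X) :=
  (TensorProduct.comm R _ X).trans (TensorProduct.piScalarRight R R X (Fin b))

@[simp] lemma finTensorEquiv_tmul {R : Type*} [CommRing R] {b : ℕ} {X : Type*}
    [AddCommGroup X] [Module R X] (f : Fin b → R) (x : X) (i : Fin b) :
    finTensorEquiv R b X (f ⊗ₜ[R] x) i = f i • x := by
  simp [finTensorEquiv, TensorProduct.piScalarRightHom_tmul]

lemma finTensorEquiv_naturality {R : Type*} [CommRing R] {b : ℕ} {X Y : Type*}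
    [AddCommGroup X] [Module R X] [AddCommGroup Y] [Module R Y] (g : X →ₗ[R] Y)
    (u : (Fin b → R) ⊗[R] X) (i : Fin b) :
    finTensorEquiv R b Y (g.lTensor _ u) i = g (finTensorEquiv R b X u i) := by
  induction u with
  | zero => simp
  | tmul f x => simp
  | add a c ha hc => simp only [map_add, Pi.add_apply, ha, hc]

lemma finTensorEquiv_claim (b : ℕ) (u : (Fin b → R) ⊗[R] invLim R N t) (i : Fin b) (n : ℕ) :
    ((finTensorEquiv R b (invLim R N t) u i : ∀ n, N n) n)
      = finTensorEquiv R b (N n)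
          ((natTensorLimMap R (Fin b → R) N t u : ∀ n, (Fin b → R) ⊗[R] N n) n) i := by
  induction u with
  | zero => simp
  | tmul f x =>
    rw [natTensorLimMap_apply_coe_tmul]
    simp
  | add a c ha hc =>
    rw [map_add, map_add]
    show ((finTensorEquiv R b (invLim R N t) a i : ∀ n, N n) n)
        + ((finTensorEquiv R b (invLim R N t) c i : ∀ n, N n) n) = _
    rw [ha, hc, Submodule.coe_add, Pi.add_apply, map_add, Pi.add_apply]

lemma natTensorLimMap_free_bijective (b : ℕ) :
    Function.Bijective (natTensorLimMap R (Fin b → R) N t) := by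
  constructor
  · rw [injective_iff_map_eq_zero]
    intro u hu
    have h0 : finTensorEquiv R b (invLim R N t) u = 0 := by
      funext i
      apply Subtype.ext
      funext n
      have := finTensorEquiv_claim t b u i n
      rw [hu] at this
      simpa using this
    apply (finTensorEquiv R b (invLim R N t)).injective
    rw [h0, map_zero]
  · intro y
    have hq : ∀ i : Fin b,
        (fun n => finTensorEquiv R b (N n) ((y : ∀ n, (Fin b → R) ⊗[R] N n) n) i)
        ∈ invLim R N t := by
      intro i n
      have hc := y.2 n
      have := finTensorEquiv_naturality (t n) ((y : ∀ n, (Fin b → R) ⊗[R] N n) (n + 1)) i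
      rw [hc] at this
      exact this.symm
    refine ⟨(finTensorEquiv R b (invLim R N t)).symm
      (fun i => ⟨_, hq i⟩), ?_⟩
    apply Subtype.ext
    funext n
    apply (finTensorEquiv R b (N n)).injective
    funext i
    rw [← finTensorEquiv_claim t b _ i n]
    rw [LinearEquiv.apply_symm_apply]

end Tensor
section KernelML

variable {R : Type*} [CommRing R]
variable {N : ℕ → Type*} [∀ n, AddCommGroup (N n)] [∀ n, Module R (N n)]
variable (t : ∀ n, N (n + 1) →ₗ[R] N n)

lemma range_map_congr {P Z X X' Y : Type*} [AddCommGroup P] [Module R P]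
    [AddCommGroup Z] [Module R Z] [AddCommGroup X] [Module R X]
    [AddCommGroup X'] [Module R X'] [AddCommGroup Y] [Module R Y]
    (f : P →ₗ[R] Z) (g : X →ₗ[R] Y) (g' : X' →ₗ[R] Y)
    (h : LinearMap.range g = LinearMap.range g') :
    LinearMap.range (TensorProduct.map f g) = LinearMap.range (TensorProduct.map f g') := by
  rw [TensorProduct.range_map_eq_span_tmul, TensorProduct.range_map_eq_span_tmul]
  congr 1
  ext z
  constructor
  · rintro ⟨m, x, rfl⟩
    have : g x ∈ LinearMap.range g' := h ▸ LinearMap.mem_range_self g x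
    obtain ⟨x', hx'⟩ := this
    exact ⟨m, x', by rw [hx']⟩
  · rintro ⟨m, x', rfl⟩
    have : g' x' ∈ LinearMap.range g := h.symm ▸ LinearMap.mem_range_self g' x'
    obtain ⟨x, hx⟩ := this
    exact ⟨m, x, by rw [hx]⟩

lemma downMap_lTensor (M : Type*) [AddCommGroup M] [Module R M] (n : ℕ) :
    ∀ k, downMap (fun n => M ⊗[R] N n) (fun n => (t n).lTensor M) n k
      = (downMap N t n k).lTensor M
  | 0 => (LinearMap.lTensor_id M _).symm
  | k + 1 => by
    show (downMap (fun n => M ⊗[R] N n) (fun n => (t n).lTensor M) n k).comp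
        ((t (n + k)).lTensor M) = _
    rw [downMap_lTensor M n k, ← LinearMap.lTensor_comp]
    rfl

lemma kernel_system_ML
    (hML : ∀ n, ∃ k₀, ∀ k, k₀ ≤ k →
      LinearMap.range (downMap N t n k) = LinearMap.range (downMap N t n k₀))
    {F M' : Type*} [AddCommGroup F] [Module R F] [AddCommGroup M'] [Module R M']
    (g : F →ₗ[R] M') (hg : Function.Surjective g) (n : ℕ) :
    ∃ k₀, ∀ k, k₀ ≤ k →
      (LinearMap.ker (g.rTensor (N (n + k)))).map
          (downMap (fun n => F ⊗[R] N n) (fun n => (t n).lTensor F) n k)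
        = (LinearMap.ker (g.rTensor (N (n + k₀)))).map
          (downMap (fun n => F ⊗[R] N n) (fun n => (t n).lTensor F) n k₀) := by
  obtain ⟨k₀, hk₀⟩ := hML n
  have key : ∀ k, (LinearMap.ker (g.rTensor (N (n + k)))).map
      (downMap (fun n => F ⊗[R] N n) (fun n => (t n).lTensor F) n k)
      = LinearMap.range (TensorProduct.map (LinearMap.ker g).subtype (downMap N t n k)) := by
    intro k
    rw [(rTensor_exact (N (n + k)) g.exact_subtype_ker_map hg).linearMap_ker_eq,
      ← LinearMap.range_comp, downMap_lTensor, LinearMap.lTensor_comp_rTensor]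
  refine ⟨k₀, fun k hk => ?_⟩
  rw [key, key]
  exact range_map_congr _ _ _ (hk₀ k hk)

lemma natTensorLimMap_surjective_of_finite
    (hML : ∀ n, ∃ k₀, ∀ k, k₀ ≤ k →
      LinearMap.range (downMap N t n k) = LinearMap.range (downMap N t n k₀))
    (M' : Type*) [AddCommGroup M'] [Module R M'] [Module.Finite R M'] :
    Function.Surjective (natTensorLimMap R M' N t) := by
  classical
  obtain ⟨b, g, hg⟩ := Module.Finite.exists_fin' R M'
  intro y
  have hcomm : ∀ n (x : (Fin b → R) ⊗[R] N (n + 1)),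
      g.rTensor (N n) ((t n).lTensor (Fin b → R) x)
        = (t n).lTensor M' (g.rTensor (N (n + 1)) x) := by
    intro n x
    rw [← LinearMap.comp_apply, ← LinearMap.comp_apply,
      LinearMap.rTensor_comp_lTensor, LinearMap.lTensor_comp_rTensor]
  obtain ⟨x, hxmem, hx⟩ := invLim_map_surjective
    (fun n => (t n).lTensor (Fin b → R)) (fun n => (t n).lTensor M')
    (fun n => g.rTensor (N n)) hcomm
    (fun n => LinearMap.rTensor_surjective (N n) hg)
    (kernel_system_ML t hML g hg) y.1 y.2
  obtain ⟨u, hu⟩ := (natTensorLimMap_free_bijective t b).2 ⟨x, hxmem⟩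
  refine ⟨g.rTensor _ u, ?_⟩
  apply Subtype.ext
  funext n
  rw [natTensorLimMap_naturality, hu]
  exact hx n

end KernelML
/-- Let `M` be a finitely presented `R`-module and `(Nₙ)` a countable inverse system of flat
`R`-modules satisfying the Mittag-Leffler condition.  Then the natural map
`M ⊗ (lim Nₙ) → lim (M ⊗ Nₙ)` is an isomorphism. -/
theorem tensor_commutes_with_lim_of_flat_mittagLeffler (R : Type*) [CommRing R]
    (M : Type*) [AddCommGroup M] [Module R M] (hfp : Module.FinitePresentation R M)
    (N : ℕ → Type*) [∀ n, AddCommGroup (N n)] [∀ n, Module R (N n)]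
    (t : ∀ n, N (n + 1) →ₗ[R] N n)
    (hflat : ∀ n, Module.Flat R (N n))
    (hML : ∀ n, ∃ k₀, ∀ k, k₀ ≤ k →
      LinearMap.range (downMap N t n k) = LinearMap.range (downMap N t n k₀)) :
    Function.Bijective (natTensorLimMap R M N t) := by
  classical
  haveI := hfp
  obtain ⟨b, g, hg⟩ := Module.Finite.exists_fin' R M
  have hK : (LinearMap.ker g).FG := Module.FinitePresentation.fg_ker g hg
  haveI : Module.Finite R (LinearMap.ker g) := Module.Finite.iff_fg.mpr hK
  constructor
  · -- injectivity
    rw [injective_iff_map_eq_zero]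
    intro u hu
    obtain ⟨u', rfl⟩ := LinearMap.rTensor_surjective (invLim R N t) hg u
    set x := natTensorLimMap R (Fin b → R) N t u' with hxdef
    have hx0 : ∀ n, g.rTensor (N n) ((x : ∀ n, (Fin b → R) ⊗[R] N n) n) = 0 := by
      intro n
      rw [← natTensorLimMap_naturality, hu]
      rfl
    have hxr : ∀ n, (x : ∀ n, (Fin b → R) ⊗[R] N n) n
        ∈ LinearMap.range ((LinearMap.ker g).subtype.rTensor (N n)) := by
      intro n
      rw [← (rTensor_exact (N n) g.exact_subtype_ker_map hg).linearMap_ker_eq]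
      exact hx0 n
    choose x' hx' using hxr
    have hinj : ∀ n, Function.Injective ((LinearMap.ker g).subtype.rTensor (N n)) := by
      intro n
      haveI := hflat n
      exact Module.Flat.rTensor_preserves_injective_linearMap _
        (Submodule.injective_subtype _)
    have hx'mem : x' ∈ invLim R (fun n => (LinearMap.ker g) ⊗[R] N n)
        (fun n => (t n).lTensor _) := by
      intro n
      apply hinj n
      rw [hx' n, ← LinearMap.comp_apply, LinearMap.rTensor_comp_lTensor,
        ← LinearMap.lTensor_comp_rTensor, LinearMap.comp_apply, hx' (n + 1)]
      exact x.2 n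
    obtain ⟨w, hw⟩ := natTensorLimMap_surjective_of_finite t hML (LinearMap.ker g)
      ⟨x', hx'mem⟩
    have hwu : (LinearMap.ker g).subtype.rTensor _ w = u' := by
      apply (natTensorLimMap_free_bijective t b).1
      apply Subtype.ext
      funext n
      rw [natTensorLimMap_naturality, hw]
      exact hx' n
    rw [← hwu, ← LinearMap.comp_apply, ← LinearMap.rTensor_comp,
      show g.comp (LinearMap.ker g).subtype = 0 from LinearMap.ext fun k => k.2,
      LinearMap.rTensor_zero, LinearMap.zero_apply]
  · exact natTensorLimMap_surjective_of_finite t hML M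
end

section
/- Let ψ act on the product ∏_{n≥n₁} M_n by (x_n)_n ↦ (τ_n(x_{n+1}))_n, where M_{n+1} = M_{n₁} ⊗_{L_{n₁}} L_{n+1}, and τ_n is induced by (1/q)·tr_{L_{n+1}/L_n}. Then the kernel of ψ − 1 is the inverse limit lim_n (M_{n₁} ⊗_{L_{n₁}} L_n) along the normalized trace maps, and if M_{n₁} is finitely presented over a Noetherian base A and the system (A[Γ_{n₁}/Γ_n])_n identifies L_n-levels, this kernel is isomorphic to M_{n₁} ⊗_A lim_n A[Γ_{n₁}/Γ_n] ≅ M_{n₁} ⊗_A D(Γ_{n₁},A)/(𝔏), the quotient of the distribution algebra by the logarithm element 𝔏 = log_LT(Z_{n₁}). -/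
open TensorProduct

/-- The natural map `M₀ ⊗ L → lim (M₀ ⊗ Nₙ)` coming from a compatible family of maps
`π n : L → N n`, sending `m ⊗ l` to `(m ⊗ π n l)ₙ`. -/
noncomputable def kernelCompareMap (R : Type*) [CommRing R] (M₀ : Type*) [AddCommGroup M₀]
    [Module R M₀] (N : ℕ → Type*) [∀ n, AddCommGroup (N n)] [∀ n, Module R (N n)]
    (t : ∀ n, N (n + 1) →ₗ[R] N n)
    (L : Type*) [AddCommGroup L] [Module R L] (π : ∀ n, L →ₗ[R] N n)
    (hπ : ∀ n (l : L), t n (π (n + 1) l) = π n l) :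
    M₀ ⊗[R] L →ₗ[R]
      invLim R (fun n => M₀ ⊗[R] N n) (fun n => LinearMap.lTensor M₀ (t n)) :=
  TensorProduct.lift <| LinearMap.mk₂ R
    (fun m l => ⟨fun n => m ⊗ₜ[R] π n l, by
      intro n
      show LinearMap.lTensor M₀ (t n) (m ⊗ₜ[R] π (n + 1) l) = m ⊗ₜ[R] π n l
      rw [LinearMap.lTensor_tmul, hπ n l]⟩)
    (fun m₁ m₂ l => Subtype.ext (funext fun n => add_tmul m₁ m₂ _))
    (fun c m l => Subtype.ext (funext fun n => (smul_tmul' c m _).symm))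
    (fun m l₁ l₂ => Subtype.ext (funext fun n => by simp [tmul_add]))
    (fun c m l => Subtype.ext (funext fun n => by simp [tmul_smul]))

section Aux

variable {A : Type*} [CommRing A]

/-- Commuting square of `rTensor` and `lTensor`. -/
theorem myTensorComm {U V X Y : Type*} [AddCommGroup U] [Module A U] [AddCommGroup V] [Module A V]
    [AddCommGroup X] [Module A X] [AddCommGroup Y] [Module A Y]
    (φ : U →ₗ[A] V) (ψ : X →ₗ[A] Y) (w : U ⊗[A] X) :
    LinearMap.lTensor V ψ (LinearMap.rTensor X φ w)
      = LinearMap.rTensor Y φ (LinearMap.lTensor U ψ w) := by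
  rw [← LinearMap.comp_apply, LinearMap.lTensor_comp_rTensor, ← LinearMap.rTensor_comp_lTensor,
    LinearMap.comp_apply]

/-- Dependent-choice lifting of a compatible family along levelwise maps with
surjective kernel transitions. -/
theorem myInvLimLift {Y Z : ℕ → Type*} [∀ n, AddCommGroup (Y n)] [∀ n, Module A (Y n)]
    [∀ n, AddCommGroup (Z n)] [∀ n, Module A (Z n)]
    (tY : ∀ n, Y (n + 1) →ₗ[A] Y n) (tZ : ∀ n, Z (n + 1) →ₗ[A] Z n)
    (g : ∀ n, Y n →ₗ[A] Z n)
    (hcomm : ∀ n (y : Y (n + 1)), tZ n (g (n + 1) y) = g n (tY n y))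
    (hker : ∀ n (y : Y n), g n y = 0 → ∃ y' : Y (n + 1), g (n + 1) y' = 0 ∧ tY n y' = y)
    (z : ∀ n, Z n) (hz : ∀ n, tZ n (z (n + 1)) = z n)
    (hlift : ∀ n, ∃ y, g n y = z n) :
    ∃ y : ∀ n, Y n, (∀ n, tY n (y (n + 1)) = y n) ∧ ∀ n, g n (y n) = z n := by
  have step : ∀ n (p : {y : Y n // g n y = z n}),
      {y : Y (n + 1) // (g (n + 1) y = z (n + 1)) ∧ tY n y = p.1} := by
    intro n p
    obtain ⟨y', hy'⟩ : {y' : Y (n + 1) // g (n + 1) y' = z (n + 1)} :=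
      ⟨(hlift (n + 1)).choose, (hlift (n + 1)).choose_spec⟩
    have hd : g n (tY n y' - p.1) = 0 := by
      rw [map_sub, ← hcomm, hy', hz, p.2, sub_self]
    obtain ⟨k, hk1, hk2⟩ : {k : Y (n + 1) // g (n + 1) k = 0 ∧ tY n k = tY n y' - p.1} :=
      ⟨(hker n _ hd).choose, (hker n _ hd).choose_spec.1, (hker n _ hd).choose_spec.2⟩
    refine ⟨y' - k, by rw [map_sub, hy', hk1, sub_zero], ?_⟩
    rw [map_sub, hk2]
    abel
  let seq : ∀ n, {y : Y n // g n y = z n} := fun n =>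
    Nat.rec ⟨(hlift 0).choose, (hlift 0).choose_spec⟩
      (fun n p => ⟨(step n p).1, (step n p).2.1⟩) n
  exact ⟨fun n => (seq n).1, fun n => (step n (seq n)).2.2, fun n => (seq n).2⟩

/-- `(Fin k → A) ⊗ X ≃ (Fin k → X)`. -/
noncomputable def myPiTensor (k : ℕ) (X : Type*) [AddCommGroup X] [Module A X] :
    ((Fin k → A) ⊗[A] X) ≃ₗ[A] (Fin k → X) :=
  (TensorProduct.comm A (Fin k → A) X).trans (TensorProduct.piScalarRight A A X (Fin k))

theorem myPiTensor_tmul {k : ℕ} {X : Type*} [AddCommGroup X] [Module A X]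
    (m : Fin k → A) (x : X) : myPiTensor k X (m ⊗ₜ[A] x) = fun i => m i • x := by
  simp [myPiTensor]

theorem myPiTensor_natural {k : ℕ} {X Y : Type*} [AddCommGroup X] [Module A X]
    [AddCommGroup Y] [Module A Y] (φ : X →ₗ[A] Y) (w : (Fin k → A) ⊗[A] X) (i : Fin k) :
    myPiTensor k Y (LinearMap.lTensor _ φ w) i = φ (myPiTensor k X w i) := by
  induction w using TensorProduct.induction_on with
  | zero => simp
  | tmul m x => simp [myPiTensor_tmul]
  | add x y hx hy => simp only [map_add, Pi.add_apply, hx, hy]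

/-- Extraction of a finite presentation by `Fin`-indexed free modules. -/
theorem myPresentation {M₀ : Type*} [AddCommGroup M₀] [Module A M₀]
    (hfp : Module.FinitePresentation A M₀) :
    ∃ (k m : ℕ) (f : (Fin m → A) →ₗ[A] (Fin k → A)) (g : (Fin k → A) →ₗ[A] M₀),
      Function.Surjective g ∧ LinearMap.ker g = LinearMap.range f := by
  classical
  obtain ⟨s, hs, hker⟩ := hfp.out
  let e0 : ((↥s →₀ A)) ≃ₗ[A] (Fin s.card → A) :=
    (Finsupp.domLCongr s.equivFin).trans (Finsupp.linearEquivFunOnFinite A A (Fin s.card))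
  let lc := Finsupp.linearCombination A ((↑) : ↥s → M₀)
  let g : (Fin s.card → A) →ₗ[A] M₀ := lc ∘ₗ (e0.symm : (Fin s.card → A) →ₗ[A] (↥s →₀ A))
  have hgsurj : Function.Surjective g := by
    have h1 : Function.Surjective lc := by
      rw [← LinearMap.range_eq_top, Finsupp.range_linearCombination, Subtype.range_coe_subtype]
      simpa using hs
    exact h1.comp e0.symm.surjective
  have hkerg : LinearMap.ker g = Submodule.map (e0 : (↥s →₀ A) →ₗ[A] _) (LinearMap.ker lc) := by
    rw [LinearMap.ker_comp, Submodule.map_equiv_eq_comap_symm]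
  have hfg : (LinearMap.ker g).FG := by
    rw [hkerg]; exact Submodule.FG.map _ hker
  obtain ⟨m, v, hv⟩ := Submodule.fg_iff_exists_fin_generating_family.mp hfg
  refine ⟨s.card, m, Fintype.linearCombination A v, g, hgsurj, ?_⟩
  rw [Fintype.range_linearCombination, hv]

variable {N : ℕ → Type*} [∀ n, AddCommGroup (N n)] [∀ n, Module A (N n)]
    (t : ∀ n, N (n + 1) →ₗ[A] N n)
    {L : Type*} [AddCommGroup L] [Module A L] (π : ∀ n, L →ₗ[A] N n)
    (hπ : ∀ n (l : L), t n (π (n + 1) l) = π n l)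

theorem myKcmApply (M : Type*) [AddCommGroup M] [Module A M] (w : M ⊗[A] L) (n : ℕ) :
    ((kernelCompareMap A M N t L π hπ w : ∀ n, M ⊗[A] N n) n)
      = LinearMap.lTensor M (π n) w := by
  induction w using TensorProduct.induction_on with
  | zero => simp
  | tmul m l => rfl
  | add x y hx hy => simp only [map_add, Submodule.coe_add, Pi.add_apply, hx, hy]

theorem myFreeSurj (hL : Function.Bijective
      (fun l : L => (⟨fun n => π n l, fun n => hπ n l⟩ : invLim A N t))) (k : ℕ)
    (z : ∀ n, (Fin k → A) ⊗[A] N n)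
    (hz : ∀ n, LinearMap.lTensor _ (t n) (z (n + 1)) = z n) :
    ∃ w : (Fin k → A) ⊗[A] L, ∀ n, LinearMap.lTensor _ (π n) w = z n := by
  classical
  have hsurjL : ∀ (c : ∀ n, N n), (∀ n, t n (c (n + 1)) = c n) → ∃ l, ∀ n, π n l = c n := by
    intro c hc
    obtain ⟨l, hl⟩ := hL.2 ⟨c, hc⟩
    exact ⟨l, fun n => congrFun (congrArg Subtype.val hl) n⟩
  have compat : ∀ i : Fin k, ∀ n, t n (myPiTensor k (N (n + 1)) (z (n + 1)) i)
      = myPiTensor k (N n) (z n) i := by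
    intro i n
    rw [← myPiTensor_natural (t n) (z (n + 1)) i, hz n]
  choose l hl using fun i => hsurjL (fun n => myPiTensor k (N n) (z n) i) (compat i)
  refine ⟨(myPiTensor k L).symm (fun i => l i), fun n => ?_⟩
  apply (myPiTensor k (N n)).injective
  funext i
  rw [myPiTensor_natural (π n), LinearEquiv.apply_symm_apply]
  exact hl i n

theorem myFreeInj (hL : Function.Bijective
      (fun l : L => (⟨fun n => π n l, fun n => hπ n l⟩ : invLim A N t))) (k : ℕ)
    (w : (Fin k → A) ⊗[A] L) (hw : ∀ n, LinearMap.lTensor _ (π n) w = 0) : w = 0 := by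
  have hinjL : ∀ l : L, (∀ n, π n l = 0) → l = 0 := by
    intro l h
    have : (⟨fun n => π n l, fun n => hπ n l⟩ : invLim A N t)
        = ⟨fun n => π n (0 : L), fun n => hπ n 0⟩ := Subtype.ext (funext fun n => by simp [h n])
    exact hL.1 this
  apply (myPiTensor k L).injective
  funext i
  simp only [map_zero, Pi.zero_apply]
  apply hinjL
  intro n
  rw [← myPiTensor_natural (π n) w i, hw n]
  simp

end Aux

/-- Kernel of `ψ - 1` on `∏ₙ (M₀ ⊗ Nₙ)`, where `ψ (xₙ)ₙ = (τₙ (x_{n+1}))ₙ` is induced by the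
normalized traces: it equals the inverse limit `lim (M₀ ⊗ Nₙ)` along the normalized trace
maps, and when `M₀` is finitely presented over the Noetherian base `A`, the system `(Nₙ)` is
Mittag-Leffler (surjective transitions) and flat, and `L ≅ lim Nₙ` (e.g.
`L = D(Γ,A)/(𝔏)`, the quotient of the distribution algebra by the logarithm), then the kernel
is isomorphic to `M₀ ⊗ L`. -/
theorem kernel_psi_sub_one_eq_tensor_with_lim (A : Type*) [CommRing A] [IsNoetherianRing A]
    (M₀ : Type*) [AddCommGroup M₀] [Module A M₀] (hfp : Module.FinitePresentation A M₀)
    (N : ℕ → Type*) [∀ n, AddCommGroup (N n)] [∀ n, Module A (N n)]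
    (t : ∀ n, N (n + 1) →ₗ[A] N n)
    (hflat : ∀ n, Module.Flat A (N n))
    (hsurj : ∀ n, Function.Surjective (t n))
    (L : Type*) [AddCommGroup L] [Module A L] (π : ∀ n, L →ₗ[A] N n)
    (hπ : ∀ n (l : L), t n (π (n + 1) l) = π n l)
    (hL : Function.Bijective
      (fun l : L => (⟨fun n => π n l, fun n => hπ n l⟩ : invLim A N t))) :
    {x : ∀ n, M₀ ⊗[A] N n |
        (fun n => LinearMap.lTensor M₀ (t n) (x (n + 1))) - x = 0} =
      (invLim A (fun n => M₀ ⊗[A] N n) (fun n => LinearMap.lTensor M₀ (t n)) : Set (∀ n, M₀ ⊗[A] N n)) ∧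
    Function.Bijective (kernelCompareMap A M₀ N t L π hπ) := by
  constructor
  · ext x
    constructor
    · intro h
      exact fun n => congrFun (sub_eq_zero.mp h) n
    · intro h
      exact sub_eq_zero.mpr (funext fun n => h n)
  · obtain ⟨k, m, f, g, hgsurj, hkerg⟩ := myPresentation hfp
    have hπcomp : ∀ n, (t n) ∘ₗ (π (n + 1)) = π n := fun n => LinearMap.ext (hπ n)
    have hexg : Function.Exact f g := LinearMap.exact_iff.mpr hkerg
    have hexgT : ∀ n, Function.Exact (f.rTensor (N n)) (g.rTensor (N n)) :=
      fun n => rTensor_exact (N n) hexg hgsurj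
    have hexi : Function.Exact (LinearMap.ker f).subtype f :=
      LinearMap.exact_iff.mpr (Submodule.range_subtype _).symm
    have hexiT : ∀ n,
        Function.Exact (((LinearMap.ker f).subtype).rTensor (N n)) (f.rTensor (N n)) := by
      intro n
      haveI := hflat n
      exact Module.Flat.rTensor_exact (N n) hexi
    have hkstep_g : ∀ n (y : (Fin k → A) ⊗[A] N n), g.rTensor (N n) y = 0 →
        ∃ y', g.rTensor (N (n + 1)) y' = 0 ∧ LinearMap.lTensor _ (t n) y' = y := by
      intro n y hy
      obtain ⟨u, hu⟩ := (hexgT n y).mp hy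
      obtain ⟨u', hu'⟩ := LinearMap.lTensor_surjective (Fin m → A) (hsurj n) u
      refine ⟨f.rTensor (N (n + 1)) u', (hexgT (n + 1) _).mpr ⟨u', rfl⟩, ?_⟩
      rw [myTensorComm, hu', hu]
    have hkstep_f : ∀ n (y : (Fin m → A) ⊗[A] N n), f.rTensor (N n) y = 0 →
        ∃ y', f.rTensor (N (n + 1)) y' = 0 ∧ LinearMap.lTensor _ (t n) y' = y := by
      intro n y hy
      obtain ⟨u, hu⟩ := (hexiT n y).mp hy
      obtain ⟨u', hu'⟩ :=
        LinearMap.lTensor_surjective (↥(LinearMap.ker f)) (hsurj n) u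
      refine ⟨(LinearMap.ker f).subtype.rTensor (N (n + 1)) u',
        (hexiT (n + 1) _).mpr ⟨u', rfl⟩, ?_⟩
      rw [myTensorComm, hu', hu]
    have hgf : g ∘ₗ f = 0 := LinearMap.ext fun p => (hexg (f p)).mpr ⟨p, rfl⟩
    constructor
    · rw [injective_iff_map_eq_zero]
      intro w hw
      have hw' : ∀ n, LinearMap.lTensor M₀ (π n) w = 0 := by
        intro n
        have h2 := congrFun (congrArg Subtype.val hw) n
        rw [myKcmApply] at h2
        simpa using h2
      obtain ⟨v, rfl⟩ := LinearMap.rTensor_surjective L hgsurj w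
      have hz : ∀ n, g.rTensor (N n) (LinearMap.lTensor _ (π n) v) = 0 := by
        intro n
        rw [← myTensorComm, hw' n]
      have hrange : ∀ n, ∃ u, f.rTensor (N n) u = LinearMap.lTensor _ (π n) v :=
        fun n => (hexgT n _).mp (hz n)
      have hcompat : ∀ n, LinearMap.lTensor (Fin k → A) (t n)
          (LinearMap.lTensor _ (π (n + 1)) v) = LinearMap.lTensor _ (π n) v := by
        intro n
        rw [← LinearMap.lTensor_comp_apply, hπcomp]
      obtain ⟨u, hu1, hu2⟩ := myInvLimLift
        (fun n => LinearMap.lTensor (Fin m → A) (t n))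
        (fun n => LinearMap.lTensor (Fin k → A) (t n))
        (fun n => f.rTensor (N n))
        (fun n y => myTensorComm f (t n) y)
        hkstep_f
        (fun n => LinearMap.lTensor _ (π n) v) hcompat hrange
      obtain ⟨w1, hw1⟩ := myFreeSurj t π hπ hL m u hu1
      have hveq : f.rTensor L w1 = v := by
        have := myFreeInj t π hπ hL k (f.rTensor L w1 - v) (fun n => by
          rw [map_sub, myTensorComm, hw1 n, hu2 n, sub_self])
        exact sub_eq_zero.mp this
      rw [← hveq, ← LinearMap.rTensor_comp_apply, hgf]
      simp
    · rintro ⟨x, hx⟩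
      have hx' : ∀ n, LinearMap.lTensor M₀ (t n) (x (n + 1)) = x n := hx
      obtain ⟨y, hy1, hy2⟩ := myInvLimLift
        (fun n => LinearMap.lTensor (Fin k → A) (t n))
        (fun n => LinearMap.lTensor M₀ (t n))
        (fun n => g.rTensor (N n))
        (fun n y => myTensorComm g (t n) y)
        hkstep_g x hx'
        (fun n => LinearMap.rTensor_surjective (N n) hgsurj (x n))
      obtain ⟨w0, hw0⟩ := myFreeSurj t π hπ hL k y hy1
      refine ⟨g.rTensor L w0, Subtype.ext (funext fun n => ?_)⟩
      rw [myKcmApply, myTensorComm, hw0 n, hy2 n]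
end
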